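/- Let X have distribution Π on the matrix completion basis 𝒳 with √(c₁/(m₁m₂)) ≤ κ₁ ≤ κ₁' ≤ √(c₁'/(m₁m₂)), and suppose 2c₁' ≤ (m₁∨m₂)·c₁. Then the centered matrix X̃ = X − E(X) satisfies c₁/(2(m₁∧m₂)) ≤ σ_{X̃}² ≤ 2c₁'/(m₁∧m₂), where σ_{X̃}² = max{‖E(X̃X̃ᵀ)‖∞, ‖E(X̃ᵀX̃)‖∞}. -/

import Mathlib

open MeasureTheory ProbabilityTheory Matrix Real

noncomputable section

namespace MC

instance matMeasurableSpace {m n : Type*} : MeasurableSpace (Matrix m n ℝ) :=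
  inferInstanceAs (MeasurableSpace (m → n → ℝ))

instance matMSC {m n : Type*} [Countable m] [Countable n] :
    MeasurableSingletonClass (Matrix m n ℝ) :=
  inferInstanceAs (MeasurableSingletonClass (m → n → ℝ))


/-- Trace inner product `⟨A,B⟩ = tr(Aᵀ B)`. -/
def mip {m₁ m₂ : ℕ} (A B : Matrix (Fin m₁) (Fin m₂) ℝ) : ℝ := (Aᵀ * B).trace

/-- Frobenius norm `‖A‖₂`. -/
def frob {m₁ m₂ : ℕ} (A : Matrix (Fin m₁) (Fin m₂) ℝ) : ℝ :=
  Real.sqrt (∑ i, ∑ j, (A i j) ^ 2)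

/-- Euclidean norm of a vector. -/
def evnorm {m : ℕ} (v : Fin m → ℝ) : ℝ := Real.sqrt (∑ i, (v i) ^ 2)

/-- Spectral norm `‖A‖_∞` (largest singular value), as the `ℓ₂ → ℓ₂` operator norm. -/
def spec {m₁ m₂ : ℕ} (A : Matrix (Fin m₁) (Fin m₂) ℝ) : ℝ :=
  sSup {r | ∃ x : Fin m₂ → ℝ, evnorm x ≤ 1 ∧ r = evnorm (A.mulVec x)}

section NormLemmas
variable {m₁ m₂ m : ℕ}

lemma evnorm_nonneg (v : Fin m → ℝ) : 0 ≤ evnorm v := Real.sqrt_nonneg _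
lemma frob_nonneg (A : Matrix (Fin m₁) (Fin m₂) ℝ) : 0 ≤ frob A := Real.sqrt_nonneg _

lemma evnorm_eq_norm (v : Fin m → ℝ) :
    evnorm v = ‖(WithLp.equiv 2 (Fin m → ℝ)).symm v‖ := by
  rw [EuclideanSpace.norm_eq]
  unfold evnorm
  congr 1
  refine Finset.sum_congr rfl fun i _ => ?_
  rw [Real.norm_eq_abs, sq_abs]; rfl

lemma evnorm_sub_le (u v : Fin m → ℝ) : evnorm (u - v) ≤ evnorm u + evnorm v := by
  rw [evnorm_eq_norm, evnorm_eq_norm, evnorm_eq_norm]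
  exact norm_sub_le _ _

lemma abs_le_evnorm (v : Fin m → ℝ) (i : Fin m) : |v i| ≤ evnorm v := by
  rw [← Real.sqrt_sq_eq_abs]
  exact Real.sqrt_le_sqrt
    (Finset.single_le_sum (f := fun i => v i ^ 2) (fun j _ => sq_nonneg _) (Finset.mem_univ i))

lemma evnorm_mulVec_le (A : Matrix (Fin m₁) (Fin m₂) ℝ) (x : Fin m₂ → ℝ) :
    evnorm (A.mulVec x) ≤ frob A * evnorm x := by
  unfold evnorm frob
  rw [← Real.sqrt_mul (by positivity)]
  apply Real.sqrt_le_sqrt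
  rw [Finset.sum_mul]
  refine Finset.sum_le_sum fun i _ => ?_
  have h : A.mulVec x i = ∑ j, A i j * x j := by simp [Matrix.mulVec, dotProduct]
  rw [h]
  exact Finset.sum_mul_sq_le_sq_mul_sq _ _ _

lemma bddAbove_specSet (A : Matrix (Fin m₁) (Fin m₂) ℝ) :
    BddAbove {r | ∃ x : Fin m₂ → ℝ, evnorm x ≤ 1 ∧ r = evnorm (A.mulVec x)} := by
  refine ⟨frob A, ?_⟩
  rintro r ⟨x, hx, rfl⟩
  calc evnorm (A.mulVec x) ≤ frob A * evnorm x := evnorm_mulVec_le A x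
    _ ≤ frob A * 1 := mul_le_mul_of_nonneg_left hx (frob_nonneg A)
    _ = frob A := mul_one _

lemma evnorm_mulVec_le_spec (A : Matrix (Fin m₁) (Fin m₂) ℝ) (x : Fin m₂ → ℝ)
    (hx : evnorm x ≤ 1) : evnorm (A.mulVec x) ≤ spec A :=
  le_csSup (bddAbove_specSet A) ⟨x, hx, rfl⟩

lemma spec_le (A : Matrix (Fin m₁) (Fin m₂) ℝ) (C : ℝ) (hC : 0 ≤ C)
    (h : ∀ x, evnorm x ≤ 1 → evnorm (A.mulVec x) ≤ C) : spec A ≤ C :=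
  Real.sSup_le (by rintro r ⟨x, hx, rfl⟩; exact h x hx) hC

lemma evnorm_single (j : Fin m) : evnorm (Pi.single j (1:ℝ)) = 1 := by
  unfold evnorm
  have : ∑ i, ((Pi.single j (1:ℝ) : Fin m → ℝ) i) ^ 2 = 1 := by
    simp [Pi.single_apply]
  rw [this, Real.sqrt_one]

lemma abs_diag_le_spec (A : Matrix (Fin m₁) (Fin m₁) ℝ) (j : Fin m₁) :
    |A j j| ≤ spec A := by
  have h1 : A.mulVec (Pi.single j (1:ℝ)) = fun i => A i j := by
    funext i
    simp [Matrix.mulVec, dotProduct, Pi.single_apply]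
  calc |A j j| ≤ evnorm (A.mulVec (Pi.single j (1:ℝ))) := by
        rw [h1]; exact abs_le_evnorm (fun i => A i j) j
    _ ≤ spec A := evnorm_mulVec_le_spec A _ (le_of_eq (evnorm_single j))

end NormLemmas

/-- Nuclear norm `‖A‖₁` (sum of singular values), via trace duality with the spectral norm. -/
def nuc {m₁ m₂ : ℕ} (A : Matrix (Fin m₁) (Fin m₂) ℝ) : ℝ :=
  sSup {r | ∃ B : Matrix (Fin m₁) (Fin m₂) ℝ, spec B ≤ 1 ∧ r = mip A B}

/-- The matrix completion basis `𝒳 = {e_j(m₁) e_k(m₂)ᵀ}`. -/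
def mcBasis (m₁ m₂ : ℕ) : Set (Matrix (Fin m₁) (Fin m₂) ℝ) :=
  {M | ∃ j k, M = Matrix.single j k (1 : ℝ)}

/-- `⟨A,B⟩_{L₂(Pdist)} = E[⟨A,X⟩⟨B,X⟩]` for `X ~ Pdist`. -/
def ipL2Pi {m₁ m₂ : ℕ} (Pdist : Measure (Matrix (Fin m₁) (Fin m₂) ℝ))
    (A B : Matrix (Fin m₁) (Fin m₂) ℝ) : ℝ :=
  ∫ M, mip A M * mip B M ∂Pdist

/-- `‖A‖²_{L₂(Pdist)} = E[⟨A,X⟩²]` for `X ~ Pdist`. -/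
def nl2sqPi {m₁ m₂ : ℕ} (Pdist : Measure (Matrix (Fin m₁) (Fin m₂) ℝ))
    (A : Matrix (Fin m₁) (Fin m₂) ℝ) : ℝ :=
  ipL2Pi Pdist A A

/-- `κ₁(Pdist) = inf{‖B‖_{L₂(Pdist)} : ‖B‖₂ = 1, rank(B) ≤ 1}`. -/
def kappa1Pi {m₁ m₂ : ℕ} (Pdist : Measure (Matrix (Fin m₁) (Fin m₂) ℝ)) : ℝ :=
  sInf {r | ∃ B : Matrix (Fin m₁) (Fin m₂) ℝ,
    frob B = 1 ∧ B.rank ≤ 1 ∧ r = Real.sqrt (nl2sqPi Pdist B)}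

/-- `κ₁'(Pdist) = sup{‖B‖_{L₂(Pdist)} : ‖B‖₂ = 1, rank(B) ≤ 1}`. -/
def kappa1'Pi {m₁ m₂ : ℕ} (Pdist : Measure (Matrix (Fin m₁) (Fin m₂) ℝ)) : ℝ :=
  sSup {r | ∃ B : Matrix (Fin m₁) (Fin m₂) ℝ,
    frob B = 1 ∧ B.rank ≤ 1 ∧ r = Real.sqrt (nl2sqPi Pdist B)}

/-- The coherence `ρ(Pdist)`. -/
def rhoPi {m₁ m₂ : ℕ} (Pdist : Measure (Matrix (Fin m₁) (Fin m₂) ℝ)) : ℝ :=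
  sSup {r | ∃ A B : Matrix (Fin m₁) (Fin m₂) ℝ, A ≠ 0 ∧ B ≠ 0 ∧ mip A B = 0 ∧
    r = |ipL2Pi Pdist A B| / (nuc A * nuc B)}

/-- Entrywise expectation `E[f(X)]` for `X ~ Pdist`. -/
def mEPi {m₁ m₂ k l : ℕ} (Pdist : Measure (Matrix (Fin m₁) (Fin m₂) ℝ))
    (f : Matrix (Fin m₁) (Fin m₂) ℝ → Matrix (Fin k) (Fin l) ℝ) : Matrix (Fin k) (Fin l) ℝ :=
  fun i j => ∫ M, f M i j ∂Pdist

section MeasLemmas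
variable {m₁ m₂ : ℕ}

lemma mip_eq_sum (A B : Matrix (Fin m₁) (Fin m₂) ℝ) :
    mip A B = ∑ i, ∑ j, A i j * B i j := by
  unfold mip Matrix.trace
  simp only [Matrix.diag, Matrix.mul_apply, Matrix.transpose_apply]
  exact Finset.sum_comm

lemma mip_std (A : Matrix (Fin m₁) (Fin m₂) ℝ) (j : Fin m₁) (k : Fin m₂) :
    mip A (Matrix.single j k 1) = A j k := by
  rw [mip_eq_sum]
  simp [Matrix.single, ite_and, Finset.sum_ite_eq', Finset.sum_ite_eq]

lemma std_inj : Function.Injective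
    (fun jk : Fin m₁ × Fin m₂ => Matrix.single jk.1 jk.2 (1:ℝ)) := by
  rintro ⟨j, k⟩ ⟨j', k'⟩ h
  simp only at h
  by_cases hc : j' = j ∧ k' = k
  · obtain ⟨rfl, rfl⟩ := hc; rfl
  · exfalso
    have h2 := congrFun (congrFun h j) k
    have e1 : Matrix.single j k (1:ℝ) j k = 1 := by simp [Matrix.single]
    have e2 : Matrix.single j' k' (1:ℝ) j k = 0 := by simp [Matrix.single, hc]
    rw [e1, e2] at h2
    norm_num at h2

variable (Pdist : Measure (Matrix (Fin m₁) (Fin m₂) ℝ)) [IsProbabilityMeasure Pdist]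

def pm (j : Fin m₁) (k : Fin m₂) : ℝ := (Pdist {Matrix.single j k (1:ℝ)}).toReal

lemma pm_nonneg (j : Fin m₁) (k : Fin m₂) : 0 ≤ pm Pdist j k := ENNReal.toReal_nonneg

lemma pm_le_one (j : Fin m₁) (k : Fin m₂) : pm Pdist j k ≤ 1 := by
  unfold pm
  calc (Pdist {Matrix.single j k (1:ℝ)}).toReal ≤ (1 : ENNReal).toReal :=
      ENNReal.toReal_mono (by norm_num) prob_le_one
    _ = 1 := by simp

lemma integral_mc (hsupp : Pdist (mcBasis m₁ m₂) = 1)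
    (f : Matrix (Fin m₁) (Fin m₂) ℝ → ℝ) :
    ∫ M, f M ∂Pdist = ∑ j, ∑ k, pm Pdist j k * f (Matrix.single j k 1) := by
  classical
  set S : Finset (Matrix (Fin m₁) (Fin m₂) ℝ) :=
    Finset.image (fun jk : Fin m₁ × Fin m₂ => Matrix.single jk.1 jk.2 (1:ℝ)) Finset.univ
    with hSdef
  have hScoe : (S : Set (Matrix (Fin m₁) (Fin m₂) ℝ)) = mcBasis m₁ m₂ := by
    ext M
    simp only [hSdef, Finset.coe_image, Finset.coe_univ, Set.image_univ, Set.mem_range,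
      mcBasis, Set.mem_setOf_eq, Prod.exists]
    constructor
    · rintro ⟨j, k, rfl⟩; exact ⟨j, k, rfl⟩
    · rintro ⟨j, k, rfl⟩; exact ⟨j, k, rfl⟩
  have hmeas : MeasurableSet (S : Set (Matrix (Fin m₁) (Fin m₂) ℝ)) := S.measurableSet
  have hae : ∀ᵐ x ∂Pdist, x ∈ (S : Set (Matrix (Fin m₁) (Fin m₂) ℝ)) := by
    rw [ae_iff]
    have h0 : {x | ¬ x ∈ (S : Set (Matrix (Fin m₁) (Fin m₂) ℝ))}
        = (↑S : Set (Matrix (Fin m₁) (Fin m₂) ℝ))ᶜ := rfl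
    rw [h0, measure_compl hmeas (measure_ne_top _ _), hScoe, hsupp, measure_univ]
    simp
  have hres : Pdist.restrict (S : Set (Matrix (Fin m₁) (Fin m₂) ℝ)) = Pdist :=
    Measure.restrict_eq_self_of_ae_mem hae
  have hint : IntegrableOn f (S : Set (Matrix (Fin m₁) (Fin m₂) ℝ)) Pdist :=
    IntegrableOn.finset
  calc ∫ M, f M ∂Pdist = ∫ M in (S : Set (Matrix (Fin m₁) (Fin m₂) ℝ)), f M ∂Pdist := by
        rw [hres]
    _ = ∑ x ∈ S, (Pdist {x}).toReal • f x := integral_finset S hint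
    _ = ∑ jk : Fin m₁ × Fin m₂,
          (Pdist {Matrix.single jk.1 jk.2 (1:ℝ)}).toReal • f (Matrix.single jk.1 jk.2 1) := by
        rw [hSdef, Finset.sum_image (fun x _ y _ h => std_inj h)]
    _ = ∑ j, ∑ k, pm Pdist j k * f (Matrix.single j k 1) := by
        rw [Fintype.sum_prod_type]
        simp [pm, smul_eq_mul]

lemma sum_pm (hsupp : Pdist (mcBasis m₁ m₂) = 1) :
    ∑ j, ∑ k, pm Pdist j k = 1 := by
  have h := integral_mc Pdist hsupp (fun _ => (1:ℝ))
  simp only [mul_one] at h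
  rw [← h]
  simp

lemma nl2sq_eq (hsupp : Pdist (mcBasis m₁ m₂) = 1) (B : Matrix (Fin m₁) (Fin m₂) ℝ) :
    nl2sqPi Pdist B = ∑ j, ∑ k, pm Pdist j k * (B j k) ^ 2 := by
  unfold nl2sqPi ipL2Pi
  rw [integral_mc Pdist hsupp]
  refine Finset.sum_congr rfl fun j _ => Finset.sum_congr rfl fun k _ => ?_
  rw [mip_std, sq]

end MeasLemmas

section KappaLemmas
variable {m₁ m₂ : ℕ}

lemma frob_std (j : Fin m₁) (k : Fin m₂) : frob (Matrix.single j k (1:ℝ)) = 1 := by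
  unfold frob
  have : ∑ i, ∑ l, (Matrix.single j k (1:ℝ) i l) ^ 2 = 1 := by
    simp [Matrix.single, ite_and, Finset.sum_ite_eq', Finset.sum_ite_eq]
  rw [this, Real.sqrt_one]

lemma rank_std (j : Fin m₁) (k : Fin m₂) :
    (Matrix.single j k (1:ℝ) : Matrix (Fin m₁) (Fin m₂) ℝ).rank ≤ 1 := by
  have h : (Matrix.single j k (1:ℝ) : Matrix (Fin m₁) (Fin m₂) ℝ)
      = (Matrix.of fun (i : Fin m₁) (_ : Fin 1) => if j = i then (1:ℝ) else 0) *
        (Matrix.of fun (_ : Fin 1) (l : Fin m₂) => if k = l then (1:ℝ) else 0) := by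
    ext i l
    by_cases h1 : j = i <;> by_cases h2 : k = l <;>
      simp [Matrix.mul_apply, Matrix.single, ite_and, h1, h2]
  rw [h]
  refine le_trans (Matrix.rank_mul_le_right _ _) ?_
  simpa using Matrix.rank_le_card_height
    (Matrix.of fun (_ : Fin 1) (l : Fin m₂) => if k = l then (1:ℝ) else 0)

variable (Pdist : Measure (Matrix (Fin m₁) (Fin m₂) ℝ)) [IsProbabilityMeasure Pdist]

lemma sqrt_pm_mem (hsupp : Pdist (mcBasis m₁ m₂) = 1) (j : Fin m₁) (k : Fin m₂) :
    Real.sqrt (pm Pdist j k) ∈ {r | ∃ B : Matrix (Fin m₁) (Fin m₂) ℝ,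
      frob B = 1 ∧ B.rank ≤ 1 ∧ r = Real.sqrt (nl2sqPi Pdist B)} := by
  refine ⟨Matrix.single j k 1, frob_std j k, rank_std j k, ?_⟩
  rw [nl2sq_eq Pdist hsupp]
  congr 1
  have : ∀ j' k', pm Pdist j' k' * (Matrix.single j k (1:ℝ) j' k') ^ 2
      = if j = j' ∧ k = k' then pm Pdist j' k' else 0 := by
    intro j' k'
    by_cases hc : j = j' ∧ k = k' <;> simp [Matrix.single, hc]
  simp only [this, Finset.sum_ite_eq, ite_and]
  simp

lemma kappaSet_bddAbove (hsupp : Pdist (mcBasis m₁ m₂) = 1) :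
    ∀ r ∈ {r | ∃ B : Matrix (Fin m₁) (Fin m₂) ℝ,
      frob B = 1 ∧ B.rank ≤ 1 ∧ r = Real.sqrt (nl2sqPi Pdist B)}, r ≤ 1 := by
  rintro r ⟨B, hB1, _, rfl⟩
  have hsum : ∑ i, ∑ l, (B i l) ^ 2 = 1 := by
    have h0 : (0:ℝ) ≤ ∑ i, ∑ l, (B i l) ^ 2 := by positivity
    have := hB1
    unfold frob at this
    nlinarith [Real.sq_sqrt h0, Real.sqrt_nonneg (∑ i, ∑ l, (B i l) ^ 2)]
  have hle : nl2sqPi Pdist B ≤ 1 := by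
    rw [nl2sq_eq Pdist hsupp, ← hsum]
    refine Finset.sum_le_sum fun i _ => Finset.sum_le_sum fun l _ => ?_
    have := pm_le_one Pdist i l
    nlinarith [pm_nonneg Pdist i l, sq_nonneg (B i l)]
  calc Real.sqrt (nl2sqPi Pdist B) ≤ Real.sqrt 1 := Real.sqrt_le_sqrt hle
    _ = 1 := Real.sqrt_one

lemma pm_le (hsupp : Pdist (mcBasis m₁ m₂) = 1) (c₁' : ℝ) (hc₁' : 0 ≤ c₁')
    (hκup : kappa1'Pi Pdist ≤ Real.sqrt (c₁' / (m₁ * m₂)))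
    (j : Fin m₁) (k : Fin m₂) : pm Pdist j k ≤ c₁' / (m₁ * m₂) := by
  have h1 : Real.sqrt (pm Pdist j k) ≤ kappa1'Pi Pdist :=
    le_csSup ⟨1, fun r hr => kappaSet_bddAbove Pdist hsupp r hr⟩ (sqrt_pm_mem Pdist hsupp j k)
  have h2 : Real.sqrt (pm Pdist j k) ≤ Real.sqrt (c₁' / (m₁ * m₂)) := h1.trans hκup
  exact (Real.sqrt_le_sqrt_iff (by positivity)).mp h2

lemma pm_ge (hsupp : Pdist (mcBasis m₁ m₂) = 1) (c₁ : ℝ)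
    (hκlow : Real.sqrt (c₁ / (m₁ * m₂)) ≤ kappa1Pi Pdist)
    (j : Fin m₁) (k : Fin m₂) : c₁ / (m₁ * m₂) ≤ pm Pdist j k := by
  have h1 : kappa1Pi Pdist ≤ Real.sqrt (pm Pdist j k) :=
    csInf_le ⟨0, by rintro r ⟨B, _, _, rfl⟩; exact Real.sqrt_nonneg _⟩
      (sqrt_pm_mem Pdist hsupp j k)
  have h2 : Real.sqrt (c₁ / (m₁ * m₂)) ≤ Real.sqrt (pm Pdist j k) := hκlow.trans h1
  exact (Real.sqrt_le_sqrt_iff (pm_nonneg Pdist j k)).mp h2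

end KappaLemmas

section KeySum
variable {ι κ : Type*} [Fintype ι] [Fintype κ] [DecidableEq ι] [DecidableEq κ]

lemma ite_and_mul (p : Prop) [Decidable p] (q : Prop) [Decidable q] :
    (if p ∧ q then (1:ℝ) else 0) = (if p then (1:ℝ) else 0) * (if q then (1:ℝ) else 0) := by
  by_cases hp : p <;> by_cases hq : q <;> simp [hp, hq]

lemma key_inner (q : ι → κ → ℝ) (a b : ι) (j : ι) (k : κ) :
    (∑ c, ((if j = a ∧ k = c then (1:ℝ) else 0) - q a c) *
          ((if j = b ∧ k = c then (1:ℝ) else 0) - q b c))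
    = (if j = a then (1:ℝ) else 0) * (if j = b then (1:ℝ) else 0)
      - (if j = a then (1:ℝ) else 0) * q b k - (if j = b then (1:ℝ) else 0) * q a k
      + ∑ c, q a c * q b c := by
  set x : ℝ := if j = a then (1:ℝ) else 0 with hx
  set y : ℝ := if j = b then (1:ℝ) else 0 with hy
  have he : ∀ c : κ, ((if k = c then (1:ℝ) else 0) * (if k = c then (1:ℝ) else 0))
      = (if k = c then (1:ℝ) else 0) := by
    intro c; by_cases h : k = c <;> simp [h]
  calc (∑ c, ((if j = a ∧ k = c then (1:ℝ) else 0) - q a c) *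
          ((if j = b ∧ k = c then (1:ℝ) else 0) - q b c))
      = ∑ c, (x * y * ((if k = c then (1:ℝ) else 0) * (if k = c then (1:ℝ) else 0))
          - x * ((if k = c then (1:ℝ) else 0) * q b c)
          - y * ((if k = c then (1:ℝ) else 0) * q a c)
          + q a c * q b c) := by
        refine Finset.sum_congr rfl fun c _ => ?_
        rw [ite_and_mul (j = a) (k = c), ite_and_mul (j = b) (k = c), ← hx, ← hy]
        ring
    _ = x * y * (∑ c, (if k = c then (1:ℝ) else 0))
        - x * (∑ c, (if k = c then (1:ℝ) else 0) * q b c)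
        - y * (∑ c, (if k = c then (1:ℝ) else 0) * q a c)
        + ∑ c, q a c * q b c := by
        simp only [Finset.sum_add_distrib, Finset.sum_sub_distrib, he, ← Finset.mul_sum]
    _ = x * y - x * q b k - y * q a k + ∑ c, q a c * q b c := by
        simp [ite_mul, one_mul, zero_mul, Finset.sum_ite_eq]

lemma key_sum (q : ι → κ → ℝ) (hq : ∑ j, ∑ k, q j k = 1) (a b : ι) :
    ∑ j, ∑ k, q j k *
      (∑ c, ((if j = a ∧ k = c then (1:ℝ) else 0) - q a c) *
            ((if j = b ∧ k = c then (1:ℝ) else 0) - q b c))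
    = (if a = b then ∑ k, q a k else 0) - ∑ c, q a c * q b c := by
  have h1 : ∑ j, ∑ k, q j k * ((if j = a then (1:ℝ) else 0) * (if j = b then 1 else 0))
      = if a = b then ∑ k, q a k else 0 := by
    rw [Finset.sum_eq_single a]
    · by_cases hab : a = b <;> simp [hab]
    · intro j _ hja; simp [hja]
    · simp
  have h2 : ∑ j, ∑ k, q j k * ((if j = a then (1:ℝ) else 0) * q b k)
      = ∑ c, q a c * q b c := by
    rw [Finset.sum_eq_single a]
    · simp
    · intro j _ hja; simp [hja]
    · simp
  have h3 : ∑ j, ∑ k, q j k * ((if j = b then (1:ℝ) else 0) * q a k)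
      = ∑ c, q a c * q b c := by
    rw [Finset.sum_eq_single b]
    · simp [mul_comm]
    · intro j _ hjb; simp [hjb]
    · simp
  have h4 : ∑ j, ∑ k, q j k * (∑ c, q a c * q b c) = ∑ c, q a c * q b c := by
    calc ∑ j, ∑ k, q j k * (∑ c, q a c * q b c)
        = ∑ j, (∑ k, q j k) * (∑ c, q a c * q b c) :=
          Finset.sum_congr rfl fun j _ => (Finset.sum_mul _ _ _).symm
      _ = (∑ j, ∑ k, q j k) * (∑ c, q a c * q b c) := (Finset.sum_mul _ _ _).symm
      _ = ∑ c, q a c * q b c := by rw [hq, one_mul]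
  calc ∑ j, ∑ k, q j k *
      (∑ c, ((if j = a ∧ k = c then (1:ℝ) else 0) - q a c) *
            ((if j = b ∧ k = c then (1:ℝ) else 0) - q b c))
      = ∑ j, ∑ k, (q j k * ((if j = a then (1:ℝ) else 0) * (if j = b then 1 else 0))
          - q j k * ((if j = a then (1:ℝ) else 0) * q b k)
          - q j k * ((if j = b then (1:ℝ) else 0) * q a k)
          + q j k * (∑ c, q a c * q b c)) := by
        refine Finset.sum_congr rfl fun j _ => Finset.sum_congr rfl fun k _ => ?_
        rw [key_inner q a b j k]; ring
    _ = (if a = b then ∑ k, q a k else 0) - ∑ c, q a c * q b c := by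
        simp only [Finset.sum_add_distrib, Finset.sum_sub_distrib, h1, h2, h3, h4]
        ring

end KeySum

section EntryLemmas
variable {m₁ m₂ : ℕ} (Pdist : Measure (Matrix (Fin m₁) (Fin m₂) ℝ)) [IsProbabilityMeasure Pdist]

lemma mean_apply (hsupp : Pdist (mcBasis m₁ m₂) = 1) (i : Fin m₁) (j : Fin m₂) :
    mEPi Pdist (fun M' => M') i j = pm Pdist i j := by
  show (∫ M, M i j ∂Pdist) = pm Pdist i j
  rw [integral_mc Pdist hsupp (fun M => M i j)]
  have hstd : ∀ (j' : Fin m₁) (k' : Fin m₂),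
      Matrix.single j' k' (1:ℝ) i j = if j' = i ∧ k' = j then 1 else 0 := fun _ _ => rfl
  simp only [hstd, ite_and, mul_ite, mul_one, mul_zero]
  rw [Finset.sum_eq_single i]
  · simp
  · intro j' _ hj'; simp [hj']
  · simp

lemma std_apply (j i : Fin m₁) (k l : Fin m₂) :
    Matrix.single j k (1:ℝ) i l = if j = i ∧ k = l then 1 else 0 := rfl

lemma M1_apply (hsupp : Pdist (mcBasis m₁ m₂) = 1) (a b : Fin m₁) :
    mEPi Pdist (fun M => (M - mEPi Pdist (fun M' => M')) *
        (M - mEPi Pdist (fun M' => M'))ᵀ) a b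
    = (if a = b then ∑ k, pm Pdist a k else 0) - ∑ c, pm Pdist a c * pm Pdist b c := by
  show (∫ M, ((M - mEPi Pdist (fun M' => M')) * (M - mEPi Pdist (fun M' => M'))ᵀ) a b ∂Pdist) = _
  rw [integral_mc Pdist hsupp]
  have hconv : ∀ (j : Fin m₁) (k : Fin m₂),
      (((Matrix.single j k (1:ℝ) : Matrix (Fin m₁) (Fin m₂) ℝ) - mEPi Pdist (fun M' => M')) *
        ((Matrix.single j k (1:ℝ) : Matrix (Fin m₁) (Fin m₂) ℝ) - mEPi Pdist (fun M' => M'))ᵀ) a b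
      = ∑ c, ((if j = a ∧ k = c then (1:ℝ) else 0) - pm Pdist a c) *
             ((if j = b ∧ k = c then (1:ℝ) else 0) - pm Pdist b c) := by
    intro j k
    rw [Matrix.mul_apply]
    refine Finset.sum_congr rfl fun c _ => ?_
    rw [Matrix.transpose_apply, Matrix.sub_apply, Matrix.sub_apply,
        mean_apply Pdist hsupp a c, mean_apply Pdist hsupp b c, std_apply, std_apply]
  simp only [hconv]
  exact key_sum (pm Pdist) (sum_pm Pdist hsupp) a b

lemma M2_apply (hsupp : Pdist (mcBasis m₁ m₂) = 1) (a b : Fin m₂) :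
    mEPi Pdist (fun M => (M - mEPi Pdist (fun M' => M'))ᵀ *
        (M - mEPi Pdist (fun M' => M'))) a b
    = (if a = b then ∑ j, pm Pdist j a else 0) - ∑ c, pm Pdist c a * pm Pdist c b := by
  show (∫ M, ((M - mEPi Pdist (fun M' => M'))ᵀ * (M - mEPi Pdist (fun M' => M'))) a b ∂Pdist) = _
  rw [integral_mc Pdist hsupp]
  have hconv : ∀ (j : Fin m₁) (k : Fin m₂),
      (((Matrix.single j k (1:ℝ) : Matrix (Fin m₁) (Fin m₂) ℝ) - mEPi Pdist (fun M' => M'))ᵀ *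
        ((Matrix.single j k (1:ℝ) : Matrix (Fin m₁) (Fin m₂) ℝ) - mEPi Pdist (fun M' => M'))) a b
      = ∑ c, ((if k = a ∧ j = c then (1:ℝ) else 0) - pm Pdist c a) *
             ((if k = b ∧ j = c then (1:ℝ) else 0) - pm Pdist c b) := by
    intro j k
    rw [Matrix.mul_apply]
    refine Finset.sum_congr rfl fun c _ => ?_
    rw [Matrix.transpose_apply, Matrix.sub_apply, Matrix.sub_apply,
        mean_apply Pdist hsupp c a, mean_apply Pdist hsupp c b, std_apply, std_apply]
    congr 2 <;> exact if_congr and_comm rfl rfl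
  simp only [hconv]
  rw [Finset.sum_comm]
  exact key_sum (fun k j => pm Pdist j k)
    (by rw [Finset.sum_comm]; exact sum_pm Pdist hsupp) a b

end EntryLemmas

section SpecBounds

lemma spec_diag_sub_le {n : ℕ} (r : Fin n → ℝ) (Q : Matrix (Fin n) (Fin n) ℝ)
    (C D : ℝ) (hC : 0 ≤ C) (hD : 0 ≤ D) (hr0 : ∀ i, 0 ≤ r i) (hrC : ∀ i, r i ≤ C)
    (hQ : frob Q ≤ D) : spec (Matrix.diagonal r - Q) ≤ C + D := by
  refine spec_le _ _ (by positivity) fun x hx => ?_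
  rw [Matrix.sub_mulVec]
  refine (evnorm_sub_le _ _).trans ?_
  have hd : evnorm ((Matrix.diagonal r).mulVec x) ≤ C := by
    have h1 : evnorm ((Matrix.diagonal r).mulVec x) ≤ C * evnorm x := by
      unfold evnorm
      calc Real.sqrt (∑ i, ((Matrix.diagonal r).mulVec x i) ^ 2)
          ≤ Real.sqrt (∑ i, C ^ 2 * (x i) ^ 2) := by
            refine Real.sqrt_le_sqrt (Finset.sum_le_sum fun i _ => ?_)
            rw [Matrix.mulVec_diagonal, mul_pow]
            have h2 : (r i) ^ 2 ≤ C ^ 2 := by nlinarith [hr0 i, hrC i]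
            nlinarith [sq_nonneg (x i)]
        _ = C * Real.sqrt (∑ i, (x i) ^ 2) := by
            rw [← Finset.mul_sum, Real.sqrt_mul (sq_nonneg C), Real.sqrt_sq hC]
    calc evnorm ((Matrix.diagonal r).mulVec x) ≤ C * evnorm x := h1
      _ ≤ C * 1 := mul_le_mul_of_nonneg_left hx hC
      _ = C := mul_one _
  have hq : evnorm (Q.mulVec x) ≤ D := by
    calc evnorm (Q.mulVec x) ≤ frob Q * evnorm x := evnorm_mulVec_le Q x
      _ ≤ D * 1 := mul_le_mul hQ hx (evnorm_nonneg x) hD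
      _ = D := mul_one _
  linarith

lemma frob_le_sum {n : ℕ} (Q : Matrix (Fin n) (Fin n) ℝ) (h0 : ∀ i j, 0 ≤ Q i j) :
    frob Q ≤ ∑ i, ∑ j, Q i j := by
  unfold frob
  set S := ∑ i, ∑ j, Q i j with hS
  have hS0 : 0 ≤ S := Finset.sum_nonneg fun i _ => Finset.sum_nonneg fun j _ => h0 i j
  have hle : ∀ i j, Q i j ≤ S := by
    intro i j
    calc Q i j ≤ ∑ j', Q i j' :=
          Finset.single_le_sum (fun j' _ => h0 i j') (Finset.mem_univ j)
      _ ≤ S := Finset.single_le_sum (f := fun i' => ∑ j', Q i' j')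
          (fun i' _ => Finset.sum_nonneg fun j' _ => h0 i' j') (Finset.mem_univ i)
  have hsq : ∑ i, ∑ j, (Q i j) ^ 2 ≤ S ^ 2 := by
    calc ∑ i, ∑ j, (Q i j) ^ 2 ≤ ∑ i, ∑ j, Q i j * S := by
          refine Finset.sum_le_sum fun i _ => Finset.sum_le_sum fun j _ => ?_
          rw [sq]
          exact mul_le_mul_of_nonneg_left (hle i j) (h0 i j)
      _ = (∑ i, (∑ j, Q i j) * S) := Finset.sum_congr rfl fun i _ => (Finset.sum_mul _ _ _).symm
      _ = S * S := by rw [← Finset.sum_mul, ← hS]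
      _ = S ^ 2 := (sq S).symm
  calc Real.sqrt (∑ i, ∑ j, (Q i j) ^ 2) ≤ Real.sqrt (S ^ 2) := Real.sqrt_le_sqrt hsq
    _ = S := by rw [Real.sqrt_sq hS0]

end SpecBounds

/-- Equation (5.4): bounds on the second-moment parameter
`σ_{X̃}²` of the centered matrix `X̃ = X - E(X)` under Assumption 3 and the technical
condition `2c₁' ≤ (m₁ ∨ m₂) c₁`. -/
theorem centered_moment_bounds {m₁ m₂ : ℕ} (hm₁ : 0 < m₁) (hm₂ : 0 < m₂)
    (Pdist : Measure (Matrix (Fin m₁) (Fin m₂) ℝ)) [IsProbabilityMeasure Pdist]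
    (hsupp : Pdist (mcBasis m₁ m₂) = 1)
    (c₁ c₁' : ℝ) (hc₁ : 0 < c₁) (hc₁₁' : c₁ ≤ c₁')
    (hκlow : Real.sqrt (c₁ / (m₁ * m₂)) ≤ kappa1Pi Pdist)
    (hκmid : kappa1Pi Pdist ≤ kappa1'Pi Pdist)
    (hκup : kappa1'Pi Pdist ≤ Real.sqrt (c₁' / (m₁ * m₂)))
    (htech : 2 * c₁' ≤ (max m₁ m₂ : ℕ) * c₁) :
    c₁ / (2 * (min m₁ m₂ : ℕ)) ≤
        max (spec (mEPi Pdist (fun M =>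
              (M - mEPi Pdist (fun M' => M')) * (M - mEPi Pdist (fun M' => M'))ᵀ)))
            (spec (mEPi Pdist (fun M =>
              (M - mEPi Pdist (fun M' => M'))ᵀ * (M - mEPi Pdist (fun M' => M'))))) ∧
      max (spec (mEPi Pdist (fun M =>
              (M - mEPi Pdist (fun M' => M')) * (M - mEPi Pdist (fun M' => M'))ᵀ)))
          (spec (mEPi Pdist (fun M =>
              (M - mEPi Pdist (fun M' => M'))ᵀ * (M - mEPi Pdist (fun M' => M'))))) ≤
        2 * c₁' / (min m₁ m₂ : ℕ) := by
  classical
  have hm₁R : (0:ℝ) < m₁ := by exact_mod_cast hm₁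
  have hm₂R : (0:ℝ) < m₂ := by exact_mod_cast hm₂
  have hc₁' : (0:ℝ) < c₁' := lt_of_lt_of_le hc₁ hc₁₁'
  have hminR : (0:ℝ) < ((min m₁ m₂ : ℕ) : ℝ) := by
    have : 0 < min m₁ m₂ := lt_min hm₁ hm₂
    exact_mod_cast this
  have hple : ∀ j k, pm Pdist j k ≤ c₁' / (m₁ * m₂) := pm_le Pdist hsupp c₁' hc₁'.le hκup
  have hpge : ∀ j k, c₁ / (m₁ * m₂) ≤ pm Pdist j k := pm_ge Pdist hsupp c₁ hκlow
  have hp0 : ∀ j k, 0 ≤ pm Pdist j k := pm_nonneg Pdist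
  have hpsum : ∑ j, ∑ k, pm Pdist j k = 1 := sum_pm Pdist hsupp
  -- row and column sums
  have hr0 : ∀ a : Fin m₁, 0 ≤ ∑ k, pm Pdist a k :=
    fun a => Finset.sum_nonneg fun k _ => hp0 a k
  have hs0 : ∀ a : Fin m₂, 0 ≤ ∑ j, pm Pdist j a :=
    fun a => Finset.sum_nonneg fun j _ => hp0 j a
  have hrub : ∀ a : Fin m₁, ∑ k, pm Pdist a k ≤ c₁' / m₁ := by
    intro a
    calc ∑ k, pm Pdist a k ≤ ∑ _k : Fin m₂, c₁' / (m₁ * m₂) :=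
        Finset.sum_le_sum fun k _ => hple a k
      _ = (m₂ : ℝ) * (c₁' / (m₁ * m₂)) := by
          rw [Finset.sum_const, Finset.card_univ, Fintype.card_fin, nsmul_eq_mul]
      _ = c₁' / m₁ := by field_simp
  have hsub : ∀ a : Fin m₂, ∑ j, pm Pdist j a ≤ c₁' / m₂ := by
    intro a
    calc ∑ j, pm Pdist j a ≤ ∑ _j : Fin m₁, c₁' / (m₁ * m₂) :=
        Finset.sum_le_sum fun j _ => hple j a
      _ = (m₁ : ℝ) * (c₁' / (m₁ * m₂)) := by
          rw [Finset.sum_const, Finset.card_univ, Fintype.card_fin, nsmul_eq_mul]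
      _ = c₁' / m₂ := by field_simp
  have hrle1 : ∀ a : Fin m₁, ∑ k, pm Pdist a k ≤ 1 := by
    intro a
    rw [← hpsum]
    exact Finset.single_le_sum (f := fun j => ∑ k, pm Pdist j k)
      (fun j _ => hr0 j) (Finset.mem_univ a)
  have hpsum' : ∑ k, ∑ j, pm Pdist j k = 1 := by rw [Finset.sum_comm]; exact hpsum
  have hsle1 : ∀ a : Fin m₂, ∑ j, pm Pdist j a ≤ 1 := by
    intro a
    rw [← hpsum']
    exact Finset.single_le_sum (f := fun k => ∑ j, pm Pdist j k)
      (fun k _ => hs0 k) (Finset.mem_univ a)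
  -- matrix identities
  have hM1eq : mEPi Pdist (fun M =>
        (M - mEPi Pdist (fun M' => M')) * (M - mEPi Pdist (fun M' => M'))ᵀ)
      = Matrix.diagonal (fun a => ∑ k, pm Pdist a k)
        - Matrix.of (fun a b => ∑ c, pm Pdist a c * pm Pdist b c) := by
    ext a b
    rw [Matrix.sub_apply, Matrix.diagonal_apply, M1_apply Pdist hsupp a b]
    rfl
  have hM2eq : mEPi Pdist (fun M =>
        (M - mEPi Pdist (fun M' => M'))ᵀ * (M - mEPi Pdist (fun M' => M')))
      = Matrix.diagonal (fun a => ∑ j, pm Pdist j a)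
        - Matrix.of (fun a b => ∑ c, pm Pdist c a * pm Pdist c b) := by
    ext a b
    rw [Matrix.sub_apply, Matrix.diagonal_apply, M2_apply Pdist hsupp a b]
    rfl
  -- Frobenius bounds on the Gram parts
  have hQ1frob : frob (Matrix.of (fun a b => ∑ c, pm Pdist a c * pm Pdist b c)
      : Matrix (Fin m₁) (Fin m₁) ℝ) ≤ c₁' / m₂ := by
    refine (frob_le_sum (Matrix.of (fun a b => ∑ c, pm Pdist a c * pm Pdist b c))
      (fun i j => by
        simp only [Matrix.of_apply]
        exact Finset.sum_nonneg fun c _ => mul_nonneg (hp0 i c) (hp0 j c))).trans ?_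
    have hswap : (∑ a : Fin m₁, ∑ b : Fin m₁, ∑ c, pm Pdist a c * pm Pdist b c)
        = ∑ c, (∑ j, pm Pdist j c) * (∑ j, pm Pdist j c) := by
      calc ∑ a : Fin m₁, ∑ b : Fin m₁, ∑ c, pm Pdist a c * pm Pdist b c
          = ∑ a : Fin m₁, ∑ c, ∑ b : Fin m₁, pm Pdist a c * pm Pdist b c :=
            Finset.sum_congr rfl fun a _ => Finset.sum_comm
        _ = ∑ c, ∑ a : Fin m₁, ∑ b : Fin m₁, pm Pdist a c * pm Pdist b c := Finset.sum_comm
        _ = ∑ c, ∑ a : Fin m₁, pm Pdist a c * (∑ j, pm Pdist j c) :=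
            Finset.sum_congr rfl fun c _ => Finset.sum_congr rfl fun a _ =>
              (Finset.mul_sum _ _ _).symm
        _ = ∑ c, (∑ j, pm Pdist j c) * (∑ j, pm Pdist j c) :=
            Finset.sum_congr rfl fun c _ => (Finset.sum_mul _ _ _).symm
    simp only [Matrix.of_apply]
    calc (∑ a : Fin m₁, ∑ b : Fin m₁, ∑ c, pm Pdist a c * pm Pdist b c)
        = ∑ c, (∑ j, pm Pdist j c) * (∑ j, pm Pdist j c) := hswap
      _ ≤ ∑ c, (c₁' / m₂) * (∑ j, pm Pdist j c) :=
          Finset.sum_le_sum fun c _ => mul_le_mul_of_nonneg_right (hsub c) (hs0 c)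
      _ = (c₁' / m₂) * ∑ c, ∑ j, pm Pdist j c := (Finset.mul_sum _ _ _).symm
      _ = c₁' / m₂ := by rw [hpsum', mul_one]
  have hQ2frob : frob (Matrix.of (fun a b => ∑ c, pm Pdist c a * pm Pdist c b)
      : Matrix (Fin m₂) (Fin m₂) ℝ) ≤ c₁' / m₁ := by
    refine (frob_le_sum (Matrix.of (fun a b => ∑ c, pm Pdist c a * pm Pdist c b))
      (fun i j => by
        simp only [Matrix.of_apply]
        exact Finset.sum_nonneg fun c _ => mul_nonneg (hp0 c i) (hp0 c j))).trans ?_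
    have hswap : (∑ a : Fin m₂, ∑ b : Fin m₂, ∑ c, pm Pdist c a * pm Pdist c b)
        = ∑ c, (∑ k, pm Pdist c k) * (∑ k, pm Pdist c k) := by
      calc ∑ a : Fin m₂, ∑ b : Fin m₂, ∑ c, pm Pdist c a * pm Pdist c b
          = ∑ a : Fin m₂, ∑ c, ∑ b : Fin m₂, pm Pdist c a * pm Pdist c b :=
            Finset.sum_congr rfl fun a _ => Finset.sum_comm
        _ = ∑ c, ∑ a : Fin m₂, ∑ b : Fin m₂, pm Pdist c a * pm Pdist c b := Finset.sum_comm
        _ = ∑ c, ∑ a : Fin m₂, pm Pdist c a * (∑ k, pm Pdist c k) :=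
            Finset.sum_congr rfl fun c _ => Finset.sum_congr rfl fun a _ =>
              (Finset.mul_sum _ _ _).symm
        _ = ∑ c, (∑ k, pm Pdist c k) * (∑ k, pm Pdist c k) :=
            Finset.sum_congr rfl fun c _ => (Finset.sum_mul _ _ _).symm
    simp only [Matrix.of_apply]
    calc (∑ a : Fin m₂, ∑ b : Fin m₂, ∑ c, pm Pdist c a * pm Pdist c b)
        = ∑ c, (∑ k, pm Pdist c k) * (∑ k, pm Pdist c k) := hswap
      _ ≤ ∑ c, (c₁' / m₁) * (∑ k, pm Pdist c k) :=
          Finset.sum_le_sum fun c _ => mul_le_mul_of_nonneg_right (hrub c) (hr0 c)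
      _ = (c₁' / m₁) * ∑ c, ∑ k, pm Pdist c k := (Finset.mul_sum _ _ _).symm
      _ = c₁' / m₁ := by rw [hpsum, mul_one]
  -- spectral upper bounds
  have hU1 : spec (mEPi Pdist (fun M =>
        (M - mEPi Pdist (fun M' => M')) * (M - mEPi Pdist (fun M' => M'))ᵀ))
      ≤ c₁' / m₁ + c₁' / m₂ := by
    rw [hM1eq]
    exact spec_diag_sub_le _ _ _ _ (by positivity) (by positivity) hr0 hrub hQ1frob
  have hU2 : spec (mEPi Pdist (fun M =>
        (M - mEPi Pdist (fun M' => M'))ᵀ * (M - mEPi Pdist (fun M' => M'))))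
      ≤ c₁' / m₂ + c₁' / m₁ := by
    rw [hM2eq]
    exact spec_diag_sub_le _ _ _ _ (by positivity) (by positivity) hs0 hsub hQ2frob
  have hsum_le : c₁' / (m₁:ℝ) + c₁' / m₂ ≤ 2 * c₁' / (min m₁ m₂ : ℕ) := by
    have h1 : ((min m₁ m₂ : ℕ) : ℝ) ≤ (m₁ : ℝ) := by exact_mod_cast Nat.min_le_left m₁ m₂
    have h2 : ((min m₁ m₂ : ℕ) : ℝ) ≤ (m₂ : ℝ) := by exact_mod_cast Nat.min_le_right m₁ m₂
    have e1 : c₁' / (m₁:ℝ) ≤ c₁' / ((min m₁ m₂ : ℕ) : ℝ) := by gcongr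
    have e2 : c₁' / (m₂:ℝ) ≤ c₁' / ((min m₁ m₂ : ℕ) : ℝ) := by gcongr
    have : 2 * c₁' / ((min m₁ m₂ : ℕ) : ℝ)
        = c₁' / ((min m₁ m₂ : ℕ) : ℝ) + c₁' / ((min m₁ m₂ : ℕ) : ℝ) := by ring
    linarith
  constructor
  · -- lower bound
    rcases le_or_gt m₁ m₂ with hmle | hmlt
    · have hminEq : min m₁ m₂ = m₁ := min_eq_left hmle
      have hmaxEq : max m₁ m₂ = m₂ := max_eq_right hmle
      have htech' : 2 * c₁' ≤ (m₂ : ℝ) * c₁ := by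
        rw [hmaxEq] at htech; exact_mod_cast htech
      set a : Fin m₁ := ⟨0, hm₁⟩ with ha
      have hdiag := M1_apply Pdist hsupp a a
      rw [if_pos rfl] at hdiag
      have hQaa : ∑ c, pm Pdist a c * pm Pdist a c ≤ c₁ / (2 * m₁) := by
        calc ∑ c, pm Pdist a c * pm Pdist a c
            ≤ ∑ c, (c₁' / (m₁ * m₂)) * pm Pdist a c :=
              Finset.sum_le_sum fun c _ => mul_le_mul_of_nonneg_right (hple a c) (hp0 a c)
          _ = (c₁' / (m₁ * m₂)) * ∑ c, pm Pdist a c := (Finset.mul_sum _ _ _).symm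
          _ ≤ (c₁' / (m₁ * m₂)) * 1 := mul_le_mul_of_nonneg_left (hrle1 a) (by positivity)
          _ ≤ c₁ / (2 * m₁) := by
              rw [mul_one, div_le_div_iff₀ (by positivity) (by positivity)]
              nlinarith
      have hrge : c₁ / (m₁:ℝ) ≤ ∑ k, pm Pdist a k := by
        calc c₁ / (m₁:ℝ) = (m₂ : ℝ) * (c₁ / (m₁ * m₂)) := by field_simp
          _ = ∑ _k : Fin m₂, c₁ / (m₁ * m₂) := by
              rw [Finset.sum_const, Finset.card_univ, Fintype.card_fin, nsmul_eq_mul]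
          _ ≤ ∑ k, pm Pdist a k := Finset.sum_le_sum fun k _ => hpge a k
      have hentry : c₁ / (2 * (m₁:ℝ)) ≤ mEPi Pdist (fun M =>
          (M - mEPi Pdist (fun M' => M')) * (M - mEPi Pdist (fun M' => M'))ᵀ) a a := by
        rw [hdiag]
        have hsplit : c₁ / (m₁:ℝ) = c₁ / (2 * m₁) + c₁ / (2 * m₁) := by ring
        linarith
      calc c₁ / (2 * ((min m₁ m₂ : ℕ) : ℝ)) = c₁ / (2 * (m₁:ℝ)) := by rw [hminEq]
        _ ≤ mEPi Pdist (fun M =>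
            (M - mEPi Pdist (fun M' => M')) * (M - mEPi Pdist (fun M' => M'))ᵀ) a a := hentry
        _ ≤ |mEPi Pdist (fun M =>
            (M - mEPi Pdist (fun M' => M')) * (M - mEPi Pdist (fun M' => M'))ᵀ) a a| :=
            le_abs_self _
        _ ≤ spec (mEPi Pdist (fun M =>
            (M - mEPi Pdist (fun M' => M')) * (M - mEPi Pdist (fun M' => M'))ᵀ)) :=
            abs_diag_le_spec _ a
        _ ≤ _ := le_max_left _ _
    · have hminEq : min m₁ m₂ = m₂ := min_eq_right hmlt.le
      have hmaxEq : max m₁ m₂ = m₁ := max_eq_left hmlt.le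
      have htech' : 2 * c₁' ≤ (m₁ : ℝ) * c₁ := by
        rw [hmaxEq] at htech; exact_mod_cast htech
      set a : Fin m₂ := ⟨0, hm₂⟩ with ha
      have hdiag := M2_apply Pdist hsupp a a
      rw [if_pos rfl] at hdiag
      have hQaa : ∑ c, pm Pdist c a * pm Pdist c a ≤ c₁ / (2 * m₂) := by
        calc ∑ c, pm Pdist c a * pm Pdist c a
            ≤ ∑ c, (c₁' / (m₁ * m₂)) * pm Pdist c a :=
              Finset.sum_le_sum fun c _ => mul_le_mul_of_nonneg_right (hple c a) (hp0 c a)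
          _ = (c₁' / (m₁ * m₂)) * ∑ c, pm Pdist c a := (Finset.mul_sum _ _ _).symm
          _ ≤ (c₁' / (m₁ * m₂)) * 1 := mul_le_mul_of_nonneg_left (hsle1 a) (by positivity)
          _ ≤ c₁ / (2 * m₂) := by
              rw [mul_one, div_le_div_iff₀ (by positivity) (by positivity)]
              nlinarith
      have hrge : c₁ / (m₂:ℝ) ≤ ∑ j, pm Pdist j a := by
        calc c₁ / (m₂:ℝ) = (m₁ : ℝ) * (c₁ / (m₁ * m₂)) := by field_simp
          _ = ∑ _j : Fin m₁, c₁ / (m₁ * m₂) := by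
              rw [Finset.sum_const, Finset.card_univ, Fintype.card_fin, nsmul_eq_mul]
          _ ≤ ∑ j, pm Pdist j a := Finset.sum_le_sum fun j _ => hpge j a
      have hentry : c₁ / (2 * (m₂:ℝ)) ≤ mEPi Pdist (fun M =>
          (M - mEPi Pdist (fun M' => M'))ᵀ * (M - mEPi Pdist (fun M' => M'))) a a := by
        rw [hdiag]
        have hsplit : c₁ / (m₂:ℝ) = c₁ / (2 * m₂) + c₁ / (2 * m₂) := by ring
        linarith
      calc c₁ / (2 * ((min m₁ m₂ : ℕ) : ℝ)) = c₁ / (2 * (m₂:ℝ)) := by rw [hminEq]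
        _ ≤ mEPi Pdist (fun M =>
            (M - mEPi Pdist (fun M' => M'))ᵀ * (M - mEPi Pdist (fun M' => M'))) a a := hentry
        _ ≤ |mEPi Pdist (fun M =>
            (M - mEPi Pdist (fun M' => M'))ᵀ * (M - mEPi Pdist (fun M' => M'))) a a| :=
            le_abs_self _
        _ ≤ spec (mEPi Pdist (fun M =>
            (M - mEPi Pdist (fun M' => M'))ᵀ * (M - mEPi Pdist (fun M' => M')))) :=
            abs_diag_le_spec _ a
        _ ≤ _ := le_max_right _ _
  · -- upper bound
    refine max_le (hU1.trans hsum_le) (hU2.trans ?_)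
    calc c₁' / (m₂:ℝ) + c₁' / m₁ = c₁' / (m₁:ℝ) + c₁' / m₂ := by ring
      _ ≤ 2 * c₁' / (min m₁ m₂ : ℕ) := hsum_le

end MC
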